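/- Let P be a bounded convex polygon in ℝ² with centre of mass at the origin, whose boundary in polar coordinates is given by r = R(θ). Let f : closure(P) → ℝ be a convex continuous function with minimum value 0 attained at the origin. Then ∫_P f dμ ≤ (1/3) ∫₀^{2π} f(R(θ),θ) R(θ)² dθ, where dμ is Lebesgue measure. -/

import Mathlib

open MeasureTheory Real Set

/-- The point with polar coordinates `(r, θ)` in the plane. -/
noncomputable def polarPt (r θ : ℝ) : Fin 2 → ℝ := ![r * Real.cos θ, r * Real.sin θ]

/-- Donaldson, "Extremal metrics on toric surfaces, I", proof of Lemma 1:
for a bounded convex polygon `P` with centre of mass the origin, boundary given in polar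
coordinates by `r = R(θ)`, and `f` convex, continuous, nonnegative on the closure of `P`
with minimum value `0` at the origin, one has
`∫_P f dμ ≤ (1/3) ∫₀^{2π} f(R(θ),θ) R(θ)² dθ`. -/
theorem stmt0 (P : Set (Fin 2 → ℝ)) (hPconv : Convex ℝ P) (hPopen : IsOpen P)
    (hPbdd : Bornology.IsBounded P) (h0P : (0 : Fin 2 → ℝ) ∈ P)
    (hcent : ∫ x in P, x ∂volume = 0)
    (R : ℝ → ℝ) (hRpos : ∀ θ, 0 < R θ) (hRcont : Continuous R)
    (hpolar : ∀ r θ : ℝ, 0 ≤ r → (polarPt r θ ∈ P ↔ r < R θ))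
    (f : (Fin 2 → ℝ) → ℝ) (hfconv : ConvexOn ℝ (closure P) f)
    (hfcont : ContinuousOn f (closure P)) (hf0 : f 0 = 0)
    (hfnonneg : ∀ x ∈ closure P, 0 ≤ f x) :
    ∫ x in P, f x ∂volume ≤
      (1/3) * ∫ θ in (0:ℝ)..(2*π), f (polarPt (R θ) θ) * (R θ)^2 := by
  have hπ : (0:ℝ) < π := Real.pi_pos
  -- continuity of the polar-point map
  have hpolarPt_cont : Continuous fun p : ℝ × ℝ => polarPt p.1 p.2 := by
    unfold polarPt
    apply continuous_pi
    intro i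
    fin_cases i <;> simp <;> fun_prop
  have hsmul : ∀ (c r θ : ℝ), polarPt (c * r) θ = c • polarPt r θ := by
    intro c r θ
    funext i
    fin_cases i <;> simp [polarPt] <;> ring
  -- the boundary point is in the closure
  have hcl : ∀ θ, polarPt (R θ) θ ∈ closure P := by
    intro θ
    have hc : Filter.Tendsto (fun r : ℝ => polarPt r θ) (nhdsWithin (R θ) (Iio (R θ)))
        (nhds (polarPt (R θ) θ)) :=
      ((hpolarPt_cont.comp (continuous_id.prodMk continuous_const)).tendsto _).mono_left
        nhdsWithin_le_nhds
    refine mem_closure_of_tendsto hc ?_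
    filter_upwards [Ioo_mem_nhdsLT_of_mem
      (show R θ ∈ Ioc (0 : ℝ) (R θ) from ⟨hRpos θ, le_refl _⟩)] with r hr
    exact (hpolar r θ hr.1.le).mpr hr.2
  set F : ℝ → ℝ := fun θ => f (polarPt (R θ) θ) with hF
  have hFcont : Continuous F :=
    hfcont.comp_continuous (hpolarPt_cont.comp (hRcont.prodMk continuous_id)) hcl
  have hFnn : ∀ θ, 0 ≤ F θ := fun θ => hfnonneg _ (hcl θ)
  -- the key convexity inequality
  have hkey : ∀ θ r, 0 ≤ r → r ≤ R θ → f (polarPt r θ) ≤ r / R θ * F θ := by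
    intro θ r hr hrR
    have hR := hRpos θ
    set t := r / R θ with ht
    have ht0 : 0 ≤ t := div_nonneg hr hR.le
    have ht1 : t ≤ 1 := (div_le_one hR).mpr hrR
    have h0c : (0 : Fin 2 → ℝ) ∈ closure P := subset_closure h0P
    have hcx := hfconv.2 (hcl θ) h0c ht0 (by linarith : (0:ℝ) ≤ 1 - t) (by ring)
    rw [hf0, smul_zero, add_zero, smul_eq_mul, smul_eq_mul, mul_zero, add_zero] at hcx
    have htr : t * R θ = r := div_mul_cancel₀ r hR.ne'
    rwa [← hsmul, htr] at hcx
  -- periodicity of R and F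
  have hpp : ∀ r θ : ℝ, polarPt r (θ + 2*π) = polarPt r θ := by
    intro r θ
    unfold polarPt
    rw [Real.cos_add_two_pi, Real.sin_add_two_pi]
  have hRper : ∀ θ, R (θ + 2*π) = R θ := by
    intro θ
    have hiff : ∀ r : ℝ, 0 ≤ r → (r < R (θ + 2*π) ↔ r < R θ) := by
      intro r hr
      rw [← hpolar r (θ + 2*π) hr, hpp, hpolar r θ hr]
    have h1 : ¬ (R θ < R (θ + 2*π)) := fun hlt =>
      lt_irrefl _ ((hiff (R θ) (hRpos θ).le).mp hlt)
    have h2 : ¬ (R (θ + 2*π) < R θ) := fun hlt =>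
      lt_irrefl _ ((hiff (R (θ + 2*π)) (hRpos _).le).mpr hlt)
    exact le_antisymm (not_lt.mp h1) (not_lt.mp h2)
  have hGper : Function.Periodic (fun θ => F θ * R θ ^ 2 / 3) (2*π) := by
    intro θ
    have hFper : F (θ + 2*π) = F θ := by
      simp only [hF]
      rw [hRper θ, hpp]
    simp only [hFper, hRper θ]
  -- transport to ℝ × ℝ
  set e : (Fin 2 → ℝ) ≃ᵐ ℝ × ℝ := MeasurableEquiv.finTwoArrow with he
  have hesymm : ∀ p : ℝ × ℝ, e.symm p = ![p.1, p.2] := by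
    intro p
    funext i
    fin_cases i <;> rfl
  set Q : Set (ℝ × ℝ) := ⇑e.symm ⁻¹' P with hQ
  have hQmeas : MeasurableSet Q := e.symm.measurable hPopen.measurableSet
  set g : ℝ × ℝ → ℝ := Q.indicator (fun y => f (e.symm y)) with hg
  have hgnn : ∀ y, 0 ≤ g y := by
    intro y
    apply indicator_nonneg
    intro y hy
    exact hfnonneg _ (subset_closure hy)
  have hsymm_polar : ∀ p : ℝ × ℝ, e.symm (polarCoord.symm p) = polarPt p.1 p.2 := by
    intro p
    rw [hesymm]
    rfl
  have eq1 : ∫ x in P, f x ∂volume = ∫ y in Q, f (e.symm y) := by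
    rw [hQ, ← MeasurableEquiv.image_eq_preimage_symm,
      (volume_preserving_finTwoArrow ℝ).setIntegral_image_emb e.measurableEmbedding]
    refine setIntegral_congr_fun hPopen.measurableSet fun x _ => ?_
    congr 1
    exact (e.symm_apply_apply x).symm
  have eq2 : ∫ y in Q, f (e.symm y) = ∫ p, g p := (integral_indicator hQmeas).symm
  have eq3 : ∫ p, g p = ∫ p in polarCoord.target, p.1 • g (polarCoord.symm p) :=
    (integral_comp_polarCoord_symm g).symm
  -- the comparison function
  set B : ℝ × ℝ → ℝ := fun p => if p.1 < R p.2 then p.1 ^ 2 * (F p.2 / R p.2) else 0 with hB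
  -- integrability of B on the target
  obtain ⟨M, hM⟩ := (isCompact_Icc (a := -π) (b := π)).exists_bound_of_continuousOn
    hRcont.continuousOn
  obtain ⟨C, hC⟩ := (isCompact_Icc (a := -π) (b := π)).exists_bound_of_continuousOn
    hFcont.continuousOn
  obtain ⟨θ₀, hθ₀, hmin⟩ := (isCompact_Icc (a := -π) (b := π)).exists_isMinOn
    ⟨0, by constructor <;> linarith⟩ hRcont.continuousOn
  set m := R θ₀ with hm
  have hmpos : 0 < m := hRpos θ₀
  have hMpos : 0 < M := lt_of_lt_of_le (hRpos 0)
    ((le_abs_self _).trans (by simpa using hM 0 ⟨by linarith, by linarith⟩))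
  have hBmeas : Measurable B := by
    have hs : MeasurableSet {p : ℝ × ℝ | p.1 < R p.2} :=
      measurableSet_lt measurable_fst (hRcont.measurable.comp measurable_snd)
    have hφ : Measurable fun p : ℝ × ℝ => p.1 ^ 2 * (F p.2 / R p.2) := by fun_prop
    exact Measurable.ite hs hφ measurable_const
  have hbound : ∀ p : ℝ × ℝ, 0 < p.1 → p.1 ≤ M → p.2 ∈ Ioo (-π) π → ‖B p‖ ≤ M ^ 2 * (C / m) := by
    intro p hp0 hpM hpθ
    have hpIcc : p.2 ∈ Icc (-π) π := Ioo_subset_Icc_self hpθ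
    have hCp : F p.2 ≤ C := (le_abs_self _).trans (by simpa using hC p.2 hpIcc)
    have hC0 : 0 ≤ C := le_trans (hFnn p.2) hCp
    by_cases hlt : p.1 < R p.2
    · have hBp : B p = p.1 ^ 2 * (F p.2 / R p.2) := if_pos hlt
      have hp1 : 0 ≤ p.1 ^ 2 := sq_nonneg _
      have hRm : m ≤ R p.2 := hmin hpIcc
      have h1 : p.1 ^ 2 ≤ M ^ 2 := by nlinarith
      have h2 : F p.2 / R p.2 ≤ C / m :=
        div_le_div₀ hC0 hCp hmpos hRm
      have hnn : 0 ≤ B p := by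
        rw [hBp]
        exact mul_nonneg (sq_nonneg _) (div_nonneg (hFnn _) (hRpos _).le)
      rw [Real.norm_eq_abs, abs_of_nonneg hnn, hBp]
      exact mul_le_mul h1 h2 (div_nonneg (hFnn _) (hRpos _).le) (sq_nonneg M)
    · have hBp : B p = 0 := if_neg hlt
      rw [hBp]
      simp only [norm_zero]
      positivity
  have hTfin : volume (Ioc (0:ℝ) M ×ˢ Ioo (-π) π) < ⊤ := by
    rw [Measure.volume_eq_prod, Measure.prod_prod]
    exact ENNReal.mul_lt_top (by simp) (by simp)
  have hTmeas : MeasurableSet (Ioc (0:ℝ) M ×ˢ Ioo (-π) π) :=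
    measurableSet_Ioc.prod measurableSet_Ioo
  have hT : IntegrableOn B (Ioc (0:ℝ) M ×ˢ Ioo (-π) π) := by
    apply Measure.integrableOn_of_bounded hTfin.ne hBmeas.aestronglyMeasurable
    refine (ae_restrict_iff' hTmeas).mpr (Filter.Eventually.of_forall fun p hp => ?_)
    exact hbound p hp.1.1 hp.1.2 hp.2
  have htarget : polarCoord.target = Ioi (0:ℝ) ×ˢ Ioo (-π) π := rfl
  have hBint : IntegrableOn B polarCoord.target := by
    have hz : IntegrableOn B (polarCoord.target \ (Ioc (0:ℝ) M ×ˢ Ioo (-π) π)) := by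
      rw [integrableOn_congr_fun (g := fun _ => (0:ℝ)) ?_ ?_]
      · exact integrableOn_zero
      · intro p hp
        rw [htarget] at hp
        have hp1 : M < p.1 := by
          by_contra hcon
          exact hp.2 ⟨⟨hp.1.1, not_lt.mp hcon⟩, hp.1.2⟩
        have : R p.2 ≤ M := (le_abs_self _).trans (by
          simpa using hM p.2 (Ioo_subset_Icc_self hp.1.2))
        exact if_neg (by linarith)
      · exact (polarCoord.open_target.measurableSet).diff hTmeas
    refine (hT.union hz).mono_set fun p hp => ?_
    by_cases h : p ∈ Ioc (0:ℝ) M ×ˢ Ioo (-π) π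
    · exact Or.inl h
    · exact Or.inr ⟨hp, h⟩
  -- the main inequality on the target
  have hineq : ∫ p in polarCoord.target, p.1 • g (polarCoord.symm p) ≤
      ∫ p in polarCoord.target, B p := by
    apply integral_mono_of_nonneg
    · refine (ae_restrict_iff' polarCoord.open_target.measurableSet).mpr
        (Filter.Eventually.of_forall fun p hp => ?_)
      rw [htarget] at hp
      dsimp only
      exact smul_nonneg (le_of_lt hp.1) (hgnn _)
    · exact hBint
    · refine (ae_restrict_iff' polarCoord.open_target.measurableSet).mpr
        (Filter.Eventually.of_forall fun p hp => ?_)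
      rw [htarget] at hp
      dsimp only
      have hp1 : 0 < p.1 := hp.1
      by_cases hlt : p.1 < R p.2
      · have hmem : polarCoord.symm p ∈ Q := by
          rw [hQ, mem_preimage, hsymm_polar]
          exact (hpolar p.1 p.2 hp1.le).mpr hlt
        have : g (polarCoord.symm p) = f (polarPt p.1 p.2) := by
          rw [hg, indicator_of_mem hmem, hsymm_polar]
        rw [smul_eq_mul, this]
        have hk := hkey p.2 p.1 hp1.le hlt.le
        calc p.1 * f (polarPt p.1 p.2) ≤ p.1 * (p.1 / R p.2 * F p.2) :=
              mul_le_mul_of_nonneg_left hk hp1.le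
          _ = p.1 ^ 2 * (F p.2 / R p.2) := by
              field_simp
          _ = B p := (if_pos hlt).symm
      · have hmem : polarCoord.symm p ∉ Q := by
          rw [hQ, mem_preimage, hsymm_polar]
          intro hc
          exact hlt ((hpolar p.1 p.2 hp1.le).mp hc)
        rw [smul_eq_mul, hg, indicator_of_notMem hmem, mul_zero, hB]
        simp [hlt]
  -- compute the integral of B via Fubini
  have hswapint : IntegrableOn (fun q : ℝ × ℝ => B (q.2, q.1)) (Ioo (-π) π ×ˢ Ioi 0) := by
    have := (Measure.measurePreserving_swap (μ := (volume : Measure ℝ))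
      (ν := (volume : Measure ℝ))).integrableOn_comp_preimage
      (MeasurableEquiv.prodComm (α := ℝ) (β := ℝ)).measurableEmbedding
      (f := B) (s := Ioi (0:ℝ) ×ˢ Ioo (-π) π)
    rw [preimage_swap_prod] at this
    rw [Measure.volume_eq_prod]
    refine this.mpr ?_
    rw [← Measure.volume_eq_prod, ← htarget]
    exact hBint
  have hfub : ∫ p in polarCoord.target, B p =
      ∫ θ in Ioo (-π) π, ∫ r in Ioi (0:ℝ), B (r, θ) := by
    have h1 : ∫ p in polarCoord.target, B p =
        ∫ q in Ioo (-π) π ×ˢ Ioi (0:ℝ), B (q.2, q.1) := by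
      rw [htarget, ← preimage_swap_prod]
      rw [Measure.volume_eq_prod]
      exact ((Measure.measurePreserving_swap).setIntegral_preimage_emb
        (MeasurableEquiv.prodComm (α := ℝ) (β := ℝ)).measurableEmbedding B _).symm
    rw [h1, Measure.volume_eq_prod, setIntegral_prod _ hswapint]
  have hinner : ∀ θ : ℝ, ∫ r in Ioi (0:ℝ), B (r, θ) = F θ * R θ ^ 2 / 3 := by
    intro θ
    have hR := hRpos θ
    have hind : ∀ r : ℝ, B (r, θ) = (Iio (R θ)).indicator (fun r => r ^ 2 * (F θ / R θ)) r := by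
      intro r
      simp [hB, indicator_apply, mem_Iio]
    simp_rw [hind]
    rw [setIntegral_indicator measurableSet_Iio, Ioi_inter_Iio,
      ← MeasureTheory.integral_Ioc_eq_integral_Ioo,
      ← intervalIntegral.integral_of_le hR.le,
      intervalIntegral.integral_mul_const, integral_pow]
    field_simp
    ring
  have houter : ∫ θ in Ioo (-π) π, ∫ r in Ioi (0:ℝ), B (r, θ) =
      ∫ θ in Ioo (-π) π, F θ * R θ ^ 2 / 3 :=
    setIntegral_congr_fun measurableSet_Ioo fun θ _ => hinner θ
  have hIoo : ∫ θ in Ioo (-π) π, F θ * R θ ^ 2 / 3 =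
      ∫ θ in (0:ℝ)..(2*π), F θ * R θ ^ 2 / 3 := by
    rw [← MeasureTheory.integral_Ioc_eq_integral_Ioo,
      ← intervalIntegral.integral_of_le (by linarith : -π ≤ π)]
    have := hGper.intervalIntegral_add_eq (-π) 0
    simp only [zero_add] at this
    rw [(by ring : -π + 2*π = π)] at this
    exact this
  have hRHS : ∫ θ in (0:ℝ)..(2*π), F θ * R θ ^ 2 / 3 =
      (1/3) * ∫ θ in (0:ℝ)..(2*π), F θ * R θ ^ 2 := by
    rw [intervalIntegral.integral_div]
    ring
  calc ∫ x in P, f x ∂volume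
      = ∫ p in polarCoord.target, p.1 • g (polarCoord.symm p) := by
        rw [eq1, eq2, eq3]
    _ ≤ ∫ p in polarCoord.target, B p := hineq
    _ = (1/3) * ∫ θ in (0:ℝ)..(2*π), F θ * R θ ^ 2 := by
        rw [hfub, houter, hIoo, hRHS]
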